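/- Let $\theta_*, \theta_{t-1}, x_t \in \mathbb{R}^d$, let $V_{t-1}$ be symmetric positive definite, $\eta > 0$ with $\eta \|x_t\|^2_{V_{t-1}^{-1}} \leq 1$. Define $A_t = \eta V_{t-1}^{-1}$ (acting on $x_t$), $V_t = V_{t-1} + \eta x_t x_t^\top$. Then $\|(I - \eta V_{t-1}^{-1} x_t x_t^\top)(\theta_{t-1} - \theta_*)\|^2_{V_t} \leq \|\theta_{t-1} - \theta_*\|^2_{V_{t-1}}$, where $\|u\|^2_A = u^\top A u$. -/

import Mathlib

open Matrix

theorem stmt_11 {d : ℕ} (θs θ x : Fin d → ℝ) (V : Matrix (Fin d) (Fin d) ℝ)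
    (hV : V.PosDef) (η : ℝ) (hη : 0 < η)
    (hq : η * (x ⬝ᵥ V⁻¹.mulVec x) ≤ 1) :
    (((1 : Matrix (Fin d) (Fin d) ℝ) - η • (V⁻¹ * vecMulVec x x)).mulVec (θ - θs)) ⬝ᵥ
        (V + η • vecMulVec x x).mulVec
          (((1 : Matrix (Fin d) (Fin d) ℝ) - η • (V⁻¹ * vecMulVec x x)).mulVec (θ - θs)) ≤
      (θ - θs) ⬝ᵥ V.mulVec (θ - θs) := by
  set u : Fin d → ℝ := θ - θs with hu
  set w : Fin d → ℝ := V⁻¹.mulVec x with hw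
  have hdet : IsUnit V.det := isUnit_iff_ne_zero.2 (ne_of_gt hV.det_pos)
  have hsym : Vᵀ = V := hV.1
  have hVw : V.mulVec w = x := by
    rw [hw, mulVec_mulVec, Matrix.mul_nonsing_inv V hdet, one_mulVec]
  have hvmv : ∀ v : Fin d → ℝ, (vecMulVec x x).mulVec v = (x ⬝ᵥ v) • x := by
    intro v
    funext i
    simp only [mulVec, vecMulVec_apply, dotProduct, Pi.smul_apply, smul_eq_mul, Finset.mul_sum,
      Finset.sum_mul]
    exact Finset.sum_congr rfl fun j _ => by ring
  set a : ℝ := x ⬝ᵥ u with ha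
  set s : ℝ := x ⬝ᵥ V⁻¹.mulVec x with hs
  have hMu : ((1 : Matrix (Fin d) (Fin d) ℝ) - η • (V⁻¹ * vecMulVec x x)).mulVec u
      = u - (η * a) • w := by
    rw [sub_mulVec, one_mulVec, smul_mulVec, ← mulVec_mulVec, hvmv]
    try rw [← ha]
    try rw [show V⁻¹ *ᵥ a • x = a • w from by rw [mulVec_smul]]
    try rw [smul_smul]
  have hwx : x ⬝ᵥ w = s := rfl
  have hxw : w ⬝ᵥ x = s := by rw [dotProduct_comm]
  have hwVu : w ⬝ᵥ V.mulVec u = a := by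
    rw [dotProduct_mulVec, ← mulVec_transpose, hsym, hVw]
  have huVw : u ⬝ᵥ V.mulVec w = a := by
    rw [hVw, dotProduct_comm]
  have hs0 : 0 ≤ s := by
    have := (hV.inv.posSemidef).dotProduct_mulVec_nonneg x
    simpa [hs] using this
  -- expand LHS
  rw [hMu, add_mulVec, smul_mulVec, hvmv]
  have expand :
      (u - (η * a) • w) ⬝ᵥ (V.mulVec (u - (η * a) • w) + η • (x ⬝ᵥ (u - (η * a) • w)) • x)
        = u ⬝ᵥ V.mulVec u - η * a ^ 2 * (1 + η * s - η ^ 2 * s ^ 2) := by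
    rw [mulVec_sub]
    simp only [dotProduct_add, dotProduct_sub, sub_dotProduct, dotProduct_smul, smul_dotProduct,
      mulVec_smul, smul_eq_mul, hwVu, huVw, hwx, hxw, ← ha]
    have hwVw : w ⬝ᵥ V.mulVec w = s := by rw [hVw, dotProduct_comm]
    try rw [hwVw]
    have hux : u ⬝ᵥ x = a := by rw [ha, dotProduct_comm]
    try rw [hux]
    try ring
  rw [expand]
  nlinarith [mul_nonneg (mul_nonneg hη.le (sq_nonneg a)) (mul_nonneg (mul_nonneg hη.le hs0) (sub_nonneg.2 hq)), mul_nonneg hη.le (sq_nonneg a)]
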